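/- Let D and M be symmetric positive semidefinite n×n real matrices with D invertible and D ⪰ M (i.e., D − M positive semidefinite). Then M† ⪰ D⁻¹ restricted to the column space of M; concretely, for every vector w in the column space of M, wᵀ D⁻¹ w ≤ wᵀ M† w. -/

import Mathlib

open Matrix

/-- `Mp` satisfies the four Penrose conditions for a Moore–Penrose pseudoinverse of `M`. -/
def IsMoorePenroseInv {n : ℕ} (M Mp : Matrix (Fin n) (Fin n) ℝ) : Prop :=
  M * Mp * M = M ∧ Mp * M * Mp = Mp ∧ (M * Mp)ᵀ = M * Mp ∧ (Mp * M)ᵀ = Mp * M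

/-- if `D` is positive definite, `M` PSD, `D − M` PSD, and `Mp = M†`,
then `wᵀ D⁻¹ w ≤ wᵀ M† w` for every `w` in the column space of `M`. -/
theorem pinv_loewner_on_colSpace {n : ℕ} (D M Mp : Matrix (Fin n) (Fin n) ℝ)
    (hD : D.PosDef) (hM : M.PosSemidef) (hDM : (D - M).PosSemidef)
    (hMp : IsMoorePenroseInv M Mp) :
    ∀ w ∈ Set.range M.mulVec, w ⬝ᵥ (D⁻¹ *ᵥ w) ≤ w ⬝ᵥ (Mp *ᵥ w) := by
  rintro w ⟨v, rfl⟩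
  have hDinv : D * D⁻¹ = 1 :=
    Matrix.mul_nonsing_inv D (isUnit_iff_ne_zero.mpr hD.det_pos.ne')
  set u : Fin n → ℝ := D⁻¹ *ᵥ (M *ᵥ v) with hu
  have hDu : D *ᵥ u = M *ᵥ v := by
    rw [hu, Matrix.mulVec_mulVec, hDinv, Matrix.one_mulVec]
  have hMsymm : Mᵀ = M := hM.1
  -- RHS equals v ⬝ᵥ M *ᵥ v
  have hMv : M *ᵥ v = v ᵥ* M := by rw [← hMsymm, Matrix.mulVec_transpose, hMsymm]
  have hRHS : (M *ᵥ v) ⬝ᵥ (Mp *ᵥ (M *ᵥ v)) = v ⬝ᵥ (M *ᵥ v) := by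
    rw [Matrix.mulVec_mulVec, hMv, Matrix.dotProduct_mulVec, Matrix.vecMul_vecMul,
      ← Matrix.mul_assoc, hMp.1, ← Matrix.dotProduct_mulVec, ← hMv]
  -- LHS equals u ⬝ᵥ D *ᵥ u
  have hLHS : (M *ᵥ v) ⬝ᵥ u = u ⬝ᵥ (D *ᵥ u) := by
    rw [hDu, dotProduct_comm]
  rw [hRHS, hLHS]
  -- PSD facts
  have h1 : 0 ≤ (v - u) ⬝ᵥ (M *ᵥ (v - u)) := by
    simpa using hM.dotProduct_mulVec_nonneg (v - u)
  have h2 : 0 ≤ u ⬝ᵥ ((D - M) *ᵥ u) := by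
    simpa using hDM.dotProduct_mulVec_nonneg u
  have hsym : u ⬝ᵥ (M *ᵥ v) = v ⬝ᵥ (M *ᵥ u) := by
    rw [Matrix.dotProduct_mulVec, ← hMsymm, Matrix.vecMul_transpose, dotProduct_comm, hMsymm]
  have huMv : u ⬝ᵥ (M *ᵥ v) = u ⬝ᵥ (D *ᵥ u) := by rw [hDu]
  have e1 : (v - u) ⬝ᵥ (M *ᵥ (v - u)) =
      v ⬝ᵥ (M *ᵥ v) - v ⬝ᵥ (M *ᵥ u) - u ⬝ᵥ (M *ᵥ v) + u ⬝ᵥ (M *ᵥ u) := by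
    rw [Matrix.mulVec_sub, sub_dotProduct, dotProduct_sub,
      dotProduct_sub]
    ring
  have e2 : u ⬝ᵥ ((D - M) *ᵥ u) = u ⬝ᵥ (D *ᵥ u) - u ⬝ᵥ (M *ᵥ u) := by
    rw [Matrix.sub_mulVec, dotProduct_sub]
  rw [e1] at h1
  rw [e2] at h2
  linarith [hsym, huMv]
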